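/- Suppose that for some k ≥ 2 every k-uniform linear hypergraph H' satisfies τ(H') ≤ (n(H') + m(H'))/(k+1). Then no k-uniform linear hypergraph H with at least one vertex of degree greater than k can achieve equality: if H has a vertex x of degree d > k, then τ(H) < (n(H) + m(H))/(k+1). -/

import Mathlib

structure UHypergraph (α : Type) where
  verts : Finset α
  edges : Finset (Finset α)
deriving DecidableEq

namespace UHypergraph

variable {α : Type} [DecidableEq α]

/-- All edges are subsets of the vertex set. -/
def Wellformed (H : UHypergraph α) : Prop := ∀ e ∈ H.edges, e ⊆ H.verts

/-- Every edge has exactly `k` vertices. -/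
def Uniform (H : UHypergraph α) (k : ℕ) : Prop := ∀ e ∈ H.edges, e.card = k

/-- Any two distinct edges intersect in at most one vertex. -/
def Linear (H : UHypergraph α) : Prop :=
  ∀ e ∈ H.edges, ∀ f ∈ H.edges, e ≠ f → (e ∩ f).card ≤ 1

/-- `T` is a transversal: a set of vertices meeting every edge. -/
def IsTransversal (H : UHypergraph α) (T : Finset α) : Prop :=
  T ⊆ H.verts ∧ ∀ e ∈ H.edges, (T ∩ e).Nonempty

/-- The transversal number: minimum size of a transversal. -/
noncomputable def tau (H : UHypergraph α) : ℕ :=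
  sInf {n : ℕ | ∃ T : Finset α, H.IsTransversal T ∧ T.card = n}

/-- The degree of a vertex: the number of edges containing it. -/
def degree (H : UHypergraph α) (v : α) : ℕ := (H.edges.filter (fun e => v ∈ e)).card

/-- Every vertex lies in exactly `r` edges. -/
def Regular (H : UHypergraph α) (r : ℕ) : Prop := ∀ v ∈ H.verts, H.degree v = r

/-- Delete a set `X` of vertices together with all edges meeting `X`. -/
def delete (H : UHypergraph α) (X : Finset α) : UHypergraph α :=
  ⟨H.verts \ X, H.edges.filter (fun e => ∀ x ∈ X, x ∉ e)⟩

end UHypergraph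

/-- Suppose that for some `k ≥ 2` every `k`-uniform linear hypergraph `H'` satisfies
`τ(H') ≤ (n(H') + m(H'))/(k+1)`. If a `k`-uniform linear hypergraph `H` has a vertex
`x` of degree `d > k`, then `τ(H) < (n(H) + m(H))/(k+1)`. -/
theorem stmt10 {α : Type} [DecidableEq α] (k : ℕ) (hk : 2 ≤ k)
    (hyp : ∀ H' : UHypergraph α, H'.Wellformed → H'.Uniform k → H'.Linear →
      (H'.tau : ℚ) ≤ ((H'.verts.card : ℚ) + (H'.edges.card : ℚ)) / ((k : ℚ) + 1))
    (H : UHypergraph α) (hw : H.Wellformed) (hu : H.Uniform k) (hl : H.Linear)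
    (x : α) (hx : x ∈ H.verts) (hd : k < H.degree x) :
    (H.tau : ℚ) < ((H.verts.card : ℚ) + (H.edges.card : ℚ)) / ((k : ℚ) + 1) := by
  set H' := H.delete {x} with hH'
  have hedges' : ∀ e ∈ H'.edges, e ∈ H.edges ∧ x ∉ e := by
    intro e he
    simp only [hH', UHypergraph.delete, Finset.mem_filter] at he
    exact ⟨he.1, by simpa using he.2⟩
  have hw' : H'.Wellformed := by
    intro e he
    obtain ⟨he1, he2⟩ := hedges' e he
    intro v hv
    simp only [hH', UHypergraph.delete, Finset.mem_sdiff, Finset.mem_singleton]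
    exact ⟨hw e he1 hv, fun h => he2 (h ▸ hv)⟩
  have hu' : H'.Uniform k := fun e he => hu e (hedges' e he).1
  have hl' : H'.Linear := fun e he f hf hef =>
    hl e (hedges' e he).1 f (hedges' f hf).1 hef
  -- tau H' is attained
  have hne : {n : ℕ | ∃ T : Finset α, H'.IsTransversal T ∧ T.card = n}.Nonempty := by
    refine ⟨H'.verts.card, H'.verts, ⟨le_refl _, ?_⟩, rfl⟩
    intro e he
    have hsub := hw' e he
    have : e.Nonempty := by
      rw [← Finset.card_pos, hu' e he]; omega
    obtain ⟨v, hv⟩ := this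
    exact ⟨v, Finset.mem_inter.2 ⟨hsub hv, hv⟩⟩
  obtain ⟨T, hT, hTcard⟩ := Nat.sInf_mem hne
  -- tau H ≤ 1 + tau H'
  have htle : H.tau ≤ 1 + H'.tau := by
    have hTrans : H.IsTransversal (insert x T) := by
      constructor
      · intro v hv
        rcases Finset.mem_insert.1 hv with rfl | hv
        · exact hx
        · have := hT.1 hv
          simp only [hH', UHypergraph.delete, Finset.mem_sdiff] at this
          exact this.1
      · intro e he
        by_cases hxe : x ∈ e
        · exact ⟨x, Finset.mem_inter.2 ⟨Finset.mem_insert_self _ _, hxe⟩⟩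
        · have he' : e ∈ H'.edges := by
            simp only [hH', UHypergraph.delete, Finset.mem_filter]
            exact ⟨he, by simpa using hxe⟩
          obtain ⟨v, hv⟩ := hT.2 e he'
          rw [Finset.mem_inter] at hv
          exact ⟨v, Finset.mem_inter.2 ⟨Finset.mem_insert_of_mem hv.1, hv.2⟩⟩
    have : H.tau ≤ (insert x T).card := Nat.sInf_le ⟨insert x T, hTrans, rfl⟩
    calc H.tau ≤ (insert x T).card := this
      _ ≤ T.card + 1 := Finset.card_insert_le _ _
      _ = 1 + H'.tau := by rw [UHypergraph.tau, ← hTcard]; omega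
  -- counting
  set n := H.verts.card
  set m := H.edges.card
  set d := H.degree x
  have hn' : H'.verts.card = n - 1 := by
    simp only [hH', UHypergraph.delete]
    rw [Finset.card_sdiff_of_subset (by simpa using hx)]
    simp; rfl
  have hm' : H'.edges.card = m - d := by
    have h1 : H'.edges = H.edges.filter (fun e => ¬ x ∈ e) := by
      simp only [hH', UHypergraph.delete]
      apply Finset.filter_congr
      intro e _; simp
    rw [h1, Finset.filter_not, Finset.card_sdiff_of_subset (Finset.filter_subset _ _)]
    rfl
  have hdm : d ≤ m := by
    have := Finset.card_filter_le H.edges (fun e => x ∈ e)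
    exact this
  have hn1 : 1 ≤ n := Finset.card_pos.2 ⟨x, hx⟩
  have hbound := hyp H' hw' hu' hl'
  rw [hn', hm'] at hbound
  have hkpos : (0 : ℚ) < (k : ℚ) + 1 := by positivity
  have hcast : ((n - 1 : ℕ) : ℚ) + ((m - d : ℕ) : ℚ) = (n : ℚ) + m - 1 - d := by
    rw [Nat.cast_sub hn1, Nat.cast_sub hdm]; push_cast; ring
  have h1 : (H.tau : ℚ) ≤ 1 + (H'.tau : ℚ) := by exact_mod_cast htle
  have h2 : (H'.tau : ℚ) ≤ ((n : ℚ) + m - 1 - d) / ((k : ℚ) + 1) := by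
    rw [← hcast]; exact hbound
  have hdq : (k : ℚ) + 1 ≤ (d : ℚ) := by exact_mod_cast hd
  calc (H.tau : ℚ) ≤ 1 + ((n : ℚ) + m - 1 - d) / ((k : ℚ) + 1) := le_trans h1 (by linarith)
    _ < ((n : ℚ) + m) / ((k : ℚ) + 1) := by
        have heq : (1:ℚ) + ((n : ℚ) + m - 1 - d) / ((k : ℚ) + 1)
            = ((k : ℚ) + 1 + ((n : ℚ) + m - 1 - d)) / ((k : ℚ) + 1) := by
          field_simp
        rw [heq, div_lt_div_iff₀ hkpos hkpos]
        nlinarith
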